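/- Upper bound on TT ranks after parallel-vector rounding: let A ∈ ℝ^{n₁×⋯×n_d} have R nonzero p-fibers and let the TT obtained by Algorithm FastTT's lossless conversion have ranks r̃₀,…,r̃_d. Then r̃_k ≤ min(R, ∏_{i=1}^{k} n_i) for 1 ≤ k < p and r̃_k ≤ min(R, ∏_{i=k+1}^{d} n_i) for p ≤ k < d. -/

import Mathlib

/-- Evaluation of a chain (matrix product) of TT cores, encoded as ℕ-indexed matrices. -/
noncomputable def ttChain (G : ℕ → ℕ → ℕ → ℝ) (r : ℕ → ℕ) : ℕ → ℕ → ℕ → ℝ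
  | 0, i, j => if i = j then 1 else 0
  | k + 1, i, j => ∑ t ∈ Finset.range (r k), ttChain G r k i t * G k t j

/-- Reconstruct a full multi-index from an index tuple on all modes except `p`
together with a value for mode `p`. -/
def glue {d : ℕ} (n : ℕ → ℕ) (p : Fin d)
    (j : (k : {k : Fin d // k ≠ p}) → Fin (n k.1.val)) (t : Fin (n p.val)) :
    (k : Fin d) → Fin (n k.val) := fun k =>
  if h : k = p then Fin.cast (congrArg n (congrArg Fin.val h.symm)) t else j ⟨k, h⟩

namespace FastTTProof

open Classical Finset

lemma ttChain_succ' (G : ℕ → ℕ → ℕ → ℝ) (r : ℕ → ℕ) {m : ℕ} (hm : 0 < m) (i j : ℕ) :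
    ttChain G r m i j
      = ∑ t ∈ Finset.range (r (m-1)), ttChain G r (m-1) i t * G (m-1) t j := by
  obtain ⟨m', rfl⟩ : ∃ m', m = m' + 1 := ⟨m - 1, by omega⟩
  simp [ttChain]

section listfacts

variable {α : Type*} [DecidableEq α] {s : Finset α} {a : α} {x : ℕ} (d₀ : α)

lemma dec_mem (hx : x < s.card) : s.toList.getD x d₀ ∈ s := by
  rw [List.getD_eq_getElem _ _ (by rwa [Finset.length_toList])]
  exact Finset.mem_toList.1 (List.getElem_mem _)

lemma cod_lt (ha : a ∈ s) : s.toList.idxOf a < s.card := by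
  rw [← Finset.length_toList]
  exact List.idxOf_lt_length_iff.2 (Finset.mem_toList.2 ha)

lemma dec_cod (ha : a ∈ s) : s.toList.getD (s.toList.idxOf a) d₀ = a := by
  rw [List.getD_eq_getElem _ _ (by rw [Finset.length_toList]; exact cod_lt ha)]
  exact List.getElem_idxOf _

lemma cod_dec (hx : x < s.card) : s.toList.idxOf (s.toList.getD x d₀) = x := by
  rw [List.getD_eq_getElem _ _ (by rwa [Finset.length_toList])]
  exact s.nodup_toList.idxOf_getElem _ _

end listfacts

variable {d : ℕ} (n : ℕ → ℕ) (P : Fin d)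

abbrev J := (k : {k : Fin d // k ≠ P}) → Fin (n k.1.val)

/-- window of mode indices governing the state at cut `c`. -/
def win (c : ℕ) (m : Fin d) : Prop :=
  (c ≤ P.val ∧ m.val < c) ∨ (P.val < c ∧ c ≤ m.val)

lemma win_zero (m : Fin d) : ¬ win P 0 m := by simp [win]

lemma win_top (m : Fin d) : ¬ win P d m := by
  have := P.isLt; have := m.isLt; simp only [win]; omega

lemma not_win_P (c : ℕ) : ¬ win P c P := by simp only [win]; omega

variable (A : ((k : Fin d) → Fin (n k.val)) → ℝ)

noncomputable def S : Finset (J n P) :=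
  Finset.univ.filter (fun j => ∃ t, A (glue n P j t) ≠ 0)

lemma glue_restrict (idx : (k : Fin d) → Fin (n k.val)) :
    glue n P (fun m : {k : Fin d // k ≠ P} => idx m.1) (idx P) = idx := by
  funext k
  by_cases h : k = P
  · subst h; simp [glue]
  · simp [glue, h]

lemma A_glue_zero {j : J n P} (h : j ∉ S n P A) (t : Fin (n P.val)) :
    A (glue n P j t) = 0 := by
  simp only [S, Finset.mem_filter, Finset.mem_univ, true_and, not_exists, not_not] at h
  exact h t

lemma cast_apply (idx : (k : Fin d) → Fin (n k.val)) {k m : Fin d} (h : k = m) :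
    Fin.cast (congrArg n (congrArg Fin.val h)) (idx k) = idx m := by
  subst h; rfl

variable (j₀ : J n P)

noncomputable def norm (c : ℕ) (j : J n P) : J n P :=
  fun k => if win P c k.1 then j k else j₀ k

noncomputable def T (c : ℕ) : Finset (J n P) := (S n P A).image (norm n P j₀ c)

noncomputable def dec (c x : ℕ) : J n P := ((T n P A j₀ c).toList).getD x j₀

noncomputable def cod (c : ℕ) (a : J n P) : ℕ := ((T n P A j₀ c).toList).idxOf a

noncomputable def setc (a : J n P) (k : Fin d) (i : Fin (n k.val)) : J n P :=
  fun m => if h : m.1 = k then Fin.cast (congrArg n (congrArg Fin.val h.symm)) i else a m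

noncomputable def comb (a b : J n P) : J n P :=
  fun m => if m.1.val < P.val then a m else b m

noncomputable def mix (c : ℕ) (b u : J n P) : J n P :=
  fun m => if win P c m.1 then b m else u m

noncomputable def rk (c : ℕ) : ℕ :=
  if c = 0 ∨ c = d then 1 else (T n P A j₀ c).card

noncomputable def core (k : Fin d) (i : Fin (n k.val)) (x y : ℕ) : ℝ :=
  if y < (T n P A j₀ (k.val + 1)).card then
    if k.val < P.val then
      (if dec n P A j₀ (k.val + 1) y = setc n P (dec n P A j₀ k.val x) k i then 1 else 0)
    else if hk : k = P then
      A (glue n P (comb n P (dec n P A j₀ k.val x) (dec n P A j₀ (k.val + 1) y))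
          (Fin.cast (congrArg n (congrArg Fin.val hk)) i))
    else
      (if dec n P A j₀ k.val x = setc n P (dec n P A j₀ (k.val + 1) y) k i then 1 else 0)
  else 0

lemma T_outside {c : ℕ} {b : J n P} (hb : b ∈ T n P A j₀ c)
    {m : {k : Fin d // k ≠ P}} (hm : ¬ win P c m.1) : b m = j₀ m := by
  obtain ⟨u, _, rfl⟩ := Finset.mem_image.1 hb
  simp [norm, hm]

lemma norm_boundary {c : ℕ} (h : ∀ m : Fin d, ¬ win P c m) (u v : J n P) :
    norm n P j₀ c u = norm n P j₀ c v := by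
  funext m; simp [norm, h m.1]

lemma T_card_boundary {c : ℕ} (h : ∀ m : Fin d, ¬ win P c m)
    (hS : (S n P A).Nonempty) : (T n P A j₀ c).card = 1 := by
  have hn : norm n P j₀ c = fun _ => (fun k => j₀ k) := by
    funext u m; simp [norm, h m.1]
  rw [T, hn, Finset.image_const hS, Finset.card_singleton]

lemma norm_mem_T {c c' : ℕ} (h : ∀ m : Fin d, win P c m → win P c' m) {u : J n P}
    (hu : norm n P j₀ c' u ∈ T n P A j₀ c') : norm n P j₀ c u ∈ T n P A j₀ c := by
  obtain ⟨s, hs, hEq⟩ := Finset.mem_image.1 hu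
  have : norm n P j₀ c u = norm n P j₀ c s := by
    funext m
    by_cases hw : win P c m.1
    · have hw' := h _ hw
      have h2 := congrFun hEq m
      simp only [norm, if_pos hw'] at h2
      simp [norm, if_pos hw, h2]
    · simp [norm, hw]
  rw [this]
  exact Finset.mem_image_of_mem _ hs


lemma T_card_le_left {k : ℕ} (hk : k ≤ P.val) :
    (T n P A j₀ k).card ≤ ∏ i ∈ Finset.range k, n i := by
  have hd : k ≤ d := by have := P.isLt; omega
  have h1 : (T n P A j₀ k).card ≤ Fintype.card ((m : Fin k) → Fin (n m.val)) := by
    rw [← Finset.card_univ]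
    refine Finset.card_le_card_of_injOn
      (fun a m => a ⟨⟨m.val, by omega⟩, by
        intro hc
        have := congrArg Fin.val hc
        simp only at this
        have := m.isLt
        omega⟩)
      (fun a _ => Finset.mem_univ _) ?_
    intro a ha b hb hab
    funext m
    by_cases hw : win P k m.1
    · have hmv : m.1.val < k := by
        simp only [win] at hw; omega
      have hm : (⟨⟨(⟨m.1.val, hmv⟩ : Fin k).val, by omega⟩, by
          intro hc
          have := congrArg Fin.val hc
          simp only at this
          have := (⟨m.1.val, hmv⟩ : Fin k).isLt
          omega⟩ : {k : Fin d // k ≠ P}) = m := Subtype.ext (Fin.ext rfl)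
      rw [← hm]
      exact congrFun hab ⟨m.1.val, hmv⟩
    · rw [T_outside n P A j₀ ha hw, T_outside n P A j₀ hb hw]
  calc (T n P A j₀ k).card ≤ _ := h1
    _ = ∏ m : Fin k, n m.val := by simp [Fintype.card_pi]
    _ = ∏ i ∈ Finset.range k, n i := Fin.prod_univ_eq_prod_range _ _

lemma T_card_le_right {k : ℕ} (hk : P.val < k) (hkd : k ≤ d) :
    (T n P A j₀ k).card ≤ ∏ i ∈ Finset.Ico k d, n i := by
  have h1 : (T n P A j₀ k).card ≤ Fintype.card ((m : Fin (d - k)) → Fin (n (k + m.val))) := by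
    rw [← Finset.card_univ]
    refine Finset.card_le_card_of_injOn
      (fun a m => a ⟨⟨k + m.val, by have := m.isLt; omega⟩, by
        intro hc
        have := congrArg Fin.val hc
        simp only at this
        omega⟩)
      (fun a _ => Finset.mem_univ _) ?_
    intro a ha b hb hab
    funext m
    by_cases hw : win P k m.1
    · have hmv : k ≤ m.1.val := by
        simp only [win] at hw; omega
      have hq : m.1.val - k < d - k := by have := m.1.isLt; omega
      have hm : (⟨⟨k + (⟨m.1.val - k, hq⟩ : Fin (d - k)).val, by
          have := (⟨m.1.val - k, hq⟩ : Fin (d-k)).isLt; omega⟩, by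
          intro hc
          have := congrArg Fin.val hc
          simp only at this
          omega⟩ : {k : Fin d // k ≠ P}) = m := Subtype.ext (Fin.ext (by simp; omega))
      rw [← hm]
      exact congrFun hab ⟨m.1.val - k, hq⟩
    · rw [T_outside n P A j₀ ha hw, T_outside n P A j₀ hb hw]
  calc (T n P A j₀ k).card ≤ _ := h1
    _ = ∏ m : Fin (d - k), n (k + m.val) := by simp [Fintype.card_pi]
    _ = ∏ i ∈ Finset.range (d - k), n (k + i) :=
        Fin.prod_univ_eq_prod_range (fun i => n (k + i)) (d - k)
    _ = ∏ i ∈ Finset.Ico k d, n i := (Finset.prod_Ico_eq_prod_range _ _ _).symm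


lemma fin_ne_P_of_val_lt {c : ℕ} (hc : c < P.val) (hcd : c < d) :
    (⟨c, hcd⟩ : Fin d) ≠ P := fun h => by
  have := congrArg Fin.val h; simp only at this; omega

lemma setc_norm_left (idx : (k : Fin d) → Fin (n k.val)) {c : ℕ}
    (hc : c + 1 ≤ P.val) (hcd : c < d) :
    setc n P (norm n P j₀ c (fun m => idx m.1)) ⟨c, hcd⟩ (idx ⟨c, hcd⟩)
      = norm n P j₀ (c + 1) (fun m => idx m.1) := by
  funext m
  by_cases h : m.1 = (⟨c, hcd⟩ : Fin d)
  · have hmv : m.1.val = c := congrArg Fin.val h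
    have hw : win P (c + 1) m.1 := by simp only [win]; omega
    simp only [setc, dif_pos h, norm, if_pos hw]
    exact cast_apply n idx h.symm
  · have hmv : m.1.val ≠ c := fun hv => h (Fin.ext hv)
    simp only [setc, dif_neg h, norm]
    by_cases hw : win P c m.1
    · have hw' : win P (c + 1) m.1 := by simp only [win] at hw ⊢; omega
      rw [if_pos hw, if_pos hw']
    · have hw' : ¬ win P (c + 1) m.1 := by simp only [win] at hw ⊢; omega
      rw [if_neg hw, if_neg hw']

lemma comb_mix (idx : (k : Fin d) → Fin (n k.val)) (b : J n P) :
    comb n P (norm n P j₀ P.val (fun m => idx m.1)) b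
      = mix n P (P.val + 1) b (fun m => idx m.1) := by
  funext m
  have hne : m.1.val ≠ P.val := fun hv => m.2 (Fin.ext hv)
  by_cases h : m.1.val < P.val
  · have hw : win P P.val m.1 := by simp only [win]; omega
    have hw' : ¬ win P (P.val + 1) m.1 := by simp only [win]; omega
    simp only [comb, if_pos h, norm, if_pos hw, mix, if_neg hw']
  · have hw' : win P (P.val + 1) m.1 := by simp only [win]; omega
    simp only [comb, if_neg h, mix, if_pos hw']

lemma mix_setc (idx : (k : Fin d) → Fin (n k.val)) {c : ℕ}
    (hc : P.val < c) (hcd : c < d) (b : J n P) :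
    mix n P c (setc n P b ⟨c, hcd⟩ (idx ⟨c, hcd⟩)) (fun m => idx m.1)
      = mix n P (c + 1) b (fun m => idx m.1) := by
  funext m
  by_cases h : m.1 = (⟨c, hcd⟩ : Fin d)
  · have hmv : m.1.val = c := congrArg Fin.val h
    have hw : win P c m.1 := by simp only [win]; omega
    have hw' : ¬ win P (c + 1) m.1 := by simp only [win]; omega
    simp only [mix, if_pos hw, if_neg hw', setc, dif_pos h]
    exact cast_apply n idx h.symm
  · have hmv : m.1.val ≠ c := fun hv => h (Fin.ext hv)
    simp only [mix, setc, dif_neg h]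
    by_cases hw : win P (c + 1) m.1
    · have hw2 : win P c m.1 := by simp only [win] at hw ⊢; omega
      rw [if_pos hw, if_pos hw2]
    · have hw2 : ¬ win P c m.1 := by simp only [win] at hw ⊢; omega
      rw [if_neg hw, if_neg hw2]

lemma norm_mix (idx : (k : Fin d) → Fin (n k.val)) {c : ℕ}
    (hc : P.val < c) (hcd : c < d) {b : J n P}
    (hb : ∀ m : {k : Fin d // k ≠ P}, ¬ win P (c + 1) m.1 → b m = j₀ m) :
    norm n P j₀ c (mix n P (c + 1) b (fun m => idx m.1))
      = setc n P b ⟨c, hcd⟩ (idx ⟨c, hcd⟩) := by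
  funext m
  by_cases hw : win P c m.1
  · have hmv : c ≤ m.1.val := by simp only [win] at hw; omega
    by_cases h : m.1 = (⟨c, hcd⟩ : Fin d)
    · have hmv' : m.1.val = c := congrArg Fin.val h
      have hw' : ¬ win P (c + 1) m.1 := by simp only [win]; omega
      simp only [norm, if_pos hw, mix, if_neg hw', setc, dif_pos h]
      exact (cast_apply n idx h.symm).symm
    · have hmv' : m.1.val ≠ c := fun hv => h (Fin.ext hv)
      have hw' : win P (c + 1) m.1 := by simp only [win]; omega
      simp only [norm, if_pos hw, mix, if_pos hw', setc, dif_neg h]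
  · have hmv : m.1.val < c := by simp only [win] at hw; omega
    have h : m.1 ≠ (⟨c, hcd⟩ : Fin d) := fun hv => absurd (congrArg Fin.val hv) (by simp; omega)
    have hw' : ¬ win P (c + 1) m.1 := by simp only [win]; omega
    simp only [norm, if_neg hw, setc, dif_neg h]
    exact (hb m hw').symm

lemma mix_top (b u : J n P) : mix n P d b u = u := by
  funext m
  simp only [mix, if_neg (win_top P m.1)]

lemma dec_mem' {c x : ℕ} (hx : x < (T n P A j₀ c).card) :
    dec n P A j₀ c x ∈ T n P A j₀ c := dec_mem j₀ hx

lemma cod_lt' {c : ℕ} {a : J n P} (ha : a ∈ T n P A j₀ c) :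
    cod n P A j₀ c a < (T n P A j₀ c).card := cod_lt ha

lemma dec_cod' {c : ℕ} {a : J n P} (ha : a ∈ T n P A j₀ c) :
    dec n P A j₀ c (cod n P A j₀ c a) = a := dec_cod j₀ ha

lemma cod_dec' {c x : ℕ} (hx : x < (T n P A j₀ c).card) :
    cod n P A j₀ c (dec n P A j₀ c x) = x := cod_dec j₀ hx

lemma core_mk {c : ℕ} (hcd : c < d) (i : Fin (n c)) (x y : ℕ) :
    core n P A j₀ ⟨c, hcd⟩ i x y =
      (if y < (T n P A j₀ (c + 1)).card then
        if c < P.val then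
          (if dec n P A j₀ (c + 1) y = setc n P (dec n P A j₀ c x) ⟨c, hcd⟩ i then 1 else 0)
        else if hk : (⟨c, hcd⟩ : Fin d) = P then
          A (glue n P (comb n P (dec n P A j₀ c x) (dec n P A j₀ (c + 1) y))
              (Fin.cast (congrArg n (congrArg Fin.val hk)) i))
        else
          (if dec n P A j₀ c x = setc n P (dec n P A j₀ (c + 1) y) ⟨c, hcd⟩ i then 1 else 0)
      else 0) := rfl

lemma core_left {c : ℕ} (hcd : c < d) (hk : c < P.val) (i : Fin (n c)) (x y : ℕ)
    (hy : y < (T n P A j₀ (c + 1)).card) :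
    core n P A j₀ ⟨c, hcd⟩ i x y =
      (if dec n P A j₀ (c + 1) y = setc n P (dec n P A j₀ c x) ⟨c, hcd⟩ i then 1 else 0) := by
  rw [core_mk n P A j₀ hcd, if_pos hy, if_pos hk]

lemma core_mid (hPd : P.val < d) (i : Fin (n P.val)) (x y : ℕ)
    (hy : y < (T n P A j₀ (P.val + 1)).card) :
    core n P A j₀ ⟨P.val, hPd⟩ i x y =
      A (glue n P (comb n P (dec n P A j₀ P.val x) (dec n P A j₀ (P.val + 1) y)) i) := by
  have hkP : (⟨P.val, hPd⟩ : Fin d) = P := Fin.ext rfl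
  rw [core_mk n P A j₀ hPd, if_pos hy, if_neg (lt_irrefl P.val), dif_pos hkP]
  have hcast : Fin.cast (congrArg n (congrArg Fin.val hkP)) i = i := Fin.ext rfl
  rw [hcast]

lemma core_right {c : ℕ} (hcd : c < d) (hk : P.val < c) (i : Fin (n c)) (x y : ℕ)
    (hy : y < (T n P A j₀ (c + 1)).card) :
    core n P A j₀ ⟨c, hcd⟩ i x y =
      (if dec n P A j₀ c x = setc n P (dec n P A j₀ (c + 1) y) ⟨c, hcd⟩ i then 1 else 0) := by
  have hne : (⟨c, hcd⟩ : Fin d) ≠ P := by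
    intro h
    have h2 : c = P.val := congrArg Fin.val h
    omega
  rw [core_mk n P A j₀ hcd, if_pos hy, if_neg (by omega), dif_neg hne]

lemma core_zero {c : ℕ} (hcd : c < d) (i : Fin (n c)) (x y : ℕ)
    (hy : ¬ y < (T n P A j₀ (c + 1)).card) :
    core n P A j₀ ⟨c, hcd⟩ i x y = 0 := by
  rw [core_mk n P A j₀ hcd, if_neg hy]

end FastTTProof

open Classical in
/-- Upper bound on the TT ranks after parallel-vector rounding:
a tensor `A ∈ ℝ^{n₁×⋯×n_d}` with `R` nonzero `p`-fibers (`p` 1-based, `1 ≤ p ≤ d`)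
admits an exact TT representation with ranks `r̃₀ = r̃_d = 1` satisfying
`r̃_k ≤ min(R, ∏_{i=1}^k n_i)` for `1 ≤ k < p` and
`r̃_k ≤ min(R, ∏_{i=k+1}^d n_i)` for `p ≤ k < d`. -/
theorem fastTT_rank_upper_bound
    (d : ℕ) (n : ℕ → ℕ) (p : ℕ) (hp : 1 ≤ p) (hpd : p ≤ d)
    (A : ((k : Fin d) → Fin (n k.val)) → ℝ)
    (R : ℕ)
    (hR : R = (Finset.univ.filter
      (fun j : (k : {k : Fin d // k ≠ (⟨p - 1, by omega⟩ : Fin d)}) →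
          Fin (n k.1.val) =>
        ∃ (t : Fin (n (⟨p - 1, by omega⟩ : Fin d).val)), A (glue n (⟨p - 1, by omega⟩ : Fin d) j t) ≠ 0)).card) :
    ∃ (r : ℕ → ℕ) (G : (k : Fin d) → Fin (n k.val) → ℕ → ℕ → ℝ),
      r 0 = 1 ∧ r d = 1 ∧
      (∀ idx : (k : Fin d) → Fin (n k.val),
        A idx = ttChain
          (fun k a b => if h : k < d then G ⟨k, h⟩ (idx ⟨k, h⟩) a b else 0)
          r d 0 0) ∧
      (∀ k, 1 ≤ k → k < p → r k ≤ min R (∏ i ∈ Finset.range k, n i)) ∧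
      (∀ k, p ≤ k → k < d → r k ≤ min R (∏ i ∈ Finset.Ico k d, n i)) := by
  classical
  have hd0 : 0 < d := by omega
  set P : Fin d := ⟨p - 1, by omega⟩ with hPdef
  have hPval : P.val = p - 1 := rfl
  have hPd : P.val < d := P.isLt
  rcases isEmpty_or_nonempty (FastTTProof.J n P) with hJ | hJ
  · refine ⟨fun c => if c = 0 ∨ c = d then 1 else 0, fun _ _ _ _ => 0,
      by simp, by simp, ?_, ?_, ?_⟩
    · intro idx
      exact (hJ.false (fun m : {k : Fin d // k ≠ P} => idx m.1)).elim
    · intro k h1 h2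
      show (if k = 0 ∨ k = d then 1 else 0) ≤ _
      rw [if_neg (by omega)]
      exact Nat.zero_le _
    · intro k h1 h2
      show (if k = 0 ∨ k = d then 1 else 0) ≤ _
      rw [if_neg (by omega)]
      exact Nat.zero_le _
  · have j₀ : FastTTProof.J n P := Classical.arbitrary _
    have hRS : R = (FastTTProof.S n P A).card := hR
    refine ⟨FastTTProof.rk n P A j₀, FastTTProof.core n P A j₀,
      by simp [FastTTProof.rk], by simp [FastTTProof.rk], ?_, ?_, ?_⟩
    · -- exactness
      intro idx
      set F : ℕ → ℕ → ℕ → ℝ :=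
        fun k a b => if h : k < d then
          FastTTProof.core n P A j₀ ⟨k, h⟩ (idx ⟨k, h⟩) a b else 0 with hF
      rcases (FastTTProof.S n P A).eq_empty_or_nonempty with hSe | hS
      · -- no nonzero fiber: tensor is zero and so is the chain
        have hji : (fun m : {k : Fin d // k ≠ P} => idx m.1) ∉ FastTTProof.S n P A := by
          rw [hSe]; exact Finset.notMem_empty _
        have hA0 : A idx = 0 := by
          have h2 := FastTTProof.A_glue_zero n P A hji (idx P)
          rwa [FastTTProof.glue_restrict n P idx] at h2
        rw [hA0, FastTTProof.ttChain_succ' F _ hd0]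
        symm
        apply Finset.sum_eq_zero
        intro x hx
        have hcd : d - 1 < d := by omega
        have hTe : ¬ ((0:ℕ) < (FastTTProof.T n P A j₀ ((d-1) + 1)).card) := by
          rw [FastTTProof.T, hSe, Finset.image_empty, Finset.card_empty]
          omega
        have hFv : F (d-1) x 0 = 0 := by
          simp only [hF]
          rw [dif_pos hcd, FastTTProof.core_zero n P A j₀ hcd _ _ _ hTe]
        rw [hFv, mul_zero]
      · -- there is a nonzero fiber
        have hrk : ∀ c, c ≤ d →
            FastTTProof.rk n P A j₀ c = (FastTTProof.T n P A j₀ c).card := by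
          intro c hc
          by_cases h0 : c = 0
          · subst h0
            rw [FastTTProof.rk, if_pos (Or.inl rfl),
              FastTTProof.T_card_boundary n P A j₀ (FastTTProof.win_zero P) hS]
          · by_cases hdd : c = d
            · subst hdd
              rw [FastTTProof.rk, if_pos (Or.inr rfl),
                FastTTProof.T_card_boundary n P A j₀ (FastTTProof.win_top P) hS]
            · rw [FastTTProof.rk, if_neg (by omega)]
        -- Left sweep claim
        have LC : ∀ c, c ≤ P.val → ∀ x, x < (FastTTProof.T n P A j₀ c).card →
            ttChain F (FastTTProof.rk n P A j₀) c 0 x =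
              (if FastTTProof.norm n P j₀ c (fun m => idx m.1) ∈ FastTTProof.T n P A j₀ c ∧
                  x = FastTTProof.cod n P A j₀ c
                    (FastTTProof.norm n P j₀ c (fun m => idx m.1)) then 1 else 0) := by
          intro c
          induction c with
          | zero =>
            intro _ x hx
            have hc1 : (FastTTProof.T n P A j₀ 0).card = 1 :=
              FastTTProof.T_card_boundary n P A j₀ (FastTTProof.win_zero P) hS
            obtain ⟨s, hs⟩ := hS
            have hmem : FastTTProof.norm n P j₀ 0 (fun m => idx m.1)
                ∈ FastTTProof.T n P A j₀ 0 := by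
              rw [FastTTProof.norm_boundary n P j₀ (FastTTProof.win_zero P) _ s]
              exact Finset.mem_image_of_mem _ hs
            have hcod : FastTTProof.cod n P A j₀ 0
                (FastTTProof.norm n P j₀ 0 (fun m => idx m.1)) = 0 := by
              have := FastTTProof.cod_lt' n P A j₀ hmem
              omega
            have hx0 : x = 0 := by omega
            subst hx0
            have hcc : (FastTTProof.norm n P j₀ 0 (fun m => idx m.1))
                  ∈ FastTTProof.T n P A j₀ 0 ∧
                0 = FastTTProof.cod n P A j₀ 0
                  (FastTTProof.norm n P j₀ 0 (fun m => idx m.1)) := ⟨hmem, hcod.symm⟩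
            simp only [ttChain]
            rw [if_pos hcc]
            simp
          | succ c ih =>
            intro hc y hy
            have hc' : c ≤ P.val := by omega
            have hcd : c < d := by omega
            simp only [ttChain]
            rw [hrk c (by omega)]
            by_cases hmem : FastTTProof.norm n P j₀ c (fun m => idx m.1)
                ∈ FastTTProof.T n P A j₀ c
            · have hkey : ∀ x ∈ Finset.range (FastTTProof.T n P A j₀ c).card,
                  ttChain F (FastTTProof.rk n P A j₀) c 0 x * F c x y =
                    (if x = FastTTProof.cod n P A j₀ c
                        (FastTTProof.norm n P j₀ c (fun m => idx m.1)) then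
                      (if FastTTProof.dec n P A j₀ (c+1) y
                          = FastTTProof.norm n P j₀ (c+1) (fun m => idx m.1)
                        then (1:ℝ) else 0) else 0) := by
                intro x hx
                rw [ih hc' x (Finset.mem_range.1 hx)]
                by_cases hxc : x = FastTTProof.cod n P A j₀ c
                    (FastTTProof.norm n P j₀ c (fun m => idx m.1))
                · rw [if_pos ⟨hmem, hxc⟩, if_pos hxc, one_mul]
                  subst hxc
                  simp only [hF]
                  rw [dif_pos hcd,
                    FastTTProof.core_left n P A j₀ hcd (by omega) _ _ _ hy,
                    FastTTProof.dec_cod' n P A j₀ hmem,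
                    FastTTProof.setc_norm_left n P j₀ idx (by omega) hcd]
                · rw [if_neg (fun h => hxc h.2), if_neg hxc, zero_mul]
              rw [Finset.sum_congr rfl hkey, Finset.sum_ite_eq' _ _ _,
                if_pos (Finset.mem_range.2 (FastTTProof.cod_lt' n P A j₀ hmem))]
              have hiff : (FastTTProof.dec n P A j₀ (c+1) y
                    = FastTTProof.norm n P j₀ (c+1) (fun m => idx m.1)) ↔
                  (FastTTProof.norm n P j₀ (c+1) (fun m => idx m.1)
                      ∈ FastTTProof.T n P A j₀ (c+1) ∧
                    y = FastTTProof.cod n P A j₀ (c+1)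
                      (FastTTProof.norm n P j₀ (c+1) (fun m => idx m.1))) := by
                constructor
                · intro h
                  refine ⟨h ▸ FastTTProof.dec_mem' n P A j₀ hy, ?_⟩
                  rw [← h, FastTTProof.cod_dec' n P A j₀ hy]
                · rintro ⟨h1, rfl⟩
                  exact FastTTProof.dec_cod' n P A j₀ h1
              rw [if_congr hiff rfl rfl]
            · have hz : ∀ x ∈ Finset.range (FastTTProof.T n P A j₀ c).card,
                  ttChain F (FastTTProof.rk n P A j₀) c 0 x * F c x y = 0 := by
                intro x hx
                rw [ih hc' x (Finset.mem_range.1 hx), if_neg (fun h => hmem h.1), zero_mul]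
              rw [Finset.sum_eq_zero hz]
              have hnot : ¬ (FastTTProof.norm n P j₀ (c+1) (fun m => idx m.1)
                    ∈ FastTTProof.T n P A j₀ (c+1) ∧
                  y = FastTTProof.cod n P A j₀ (c+1)
                    (FastTTProof.norm n P j₀ (c+1) (fun m => idx m.1))) := by
                intro h
                exact hmem (FastTTProof.norm_mem_T n P A j₀
                  (fun m hm => by simp only [FastTTProof.win] at hm ⊢; omega) h.1)
              rw [if_neg hnot]
        -- Right sweep claim
        have RC : ∀ c, P.val + 1 ≤ c → c ≤ d → ∀ y, y < (FastTTProof.T n P A j₀ c).card →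
            ttChain F (FastTTProof.rk n P A j₀) c 0 y =
              (if FastTTProof.norm n P j₀ P.val (fun m => idx m.1)
                  ∈ FastTTProof.T n P A j₀ P.val then
                A (glue n P (FastTTProof.mix n P c (FastTTProof.dec n P A j₀ c y)
                  (fun m => idx m.1)) (idx P))
              else 0) := by
          intro c hc1
          induction c, hc1 using Nat.le_induction with
          | base =>
            intro hc2 y hy
            simp only [ttChain]
            rw [hrk P.val (by omega)]
            by_cases hmem : FastTTProof.norm n P j₀ P.val (fun m => idx m.1)
                ∈ FastTTProof.T n P A j₀ P.val
            · have hkey : ∀ x ∈ Finset.range (FastTTProof.T n P A j₀ P.val).card,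
                  ttChain F (FastTTProof.rk n P A j₀) P.val 0 x * F P.val x y =
                    (if x = FastTTProof.cod n P A j₀ P.val
                        (FastTTProof.norm n P j₀ P.val (fun m => idx m.1)) then
                      A (glue n P (FastTTProof.mix n P (P.val+1)
                        (FastTTProof.dec n P A j₀ (P.val+1) y) (fun m => idx m.1)) (idx P))
                    else 0) := by
                intro x hx
                rw [LC P.val le_rfl x (Finset.mem_range.1 hx)]
                by_cases hxc : x = FastTTProof.cod n P A j₀ P.val
                    (FastTTProof.norm n P j₀ P.val (fun m => idx m.1))
                · rw [if_pos ⟨hmem, hxc⟩, if_pos hxc, one_mul]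
                  subst hxc
                  simp only [hF]
                  rw [dif_pos hPd, FastTTProof.core_mid n P A j₀ hPd _ _ _ hy,
                    FastTTProof.dec_cod' n P A j₀ hmem,
                    FastTTProof.comb_mix n P j₀ idx _]
                · rw [if_neg (fun h => hxc h.2), if_neg hxc, zero_mul]
              rw [Finset.sum_congr rfl hkey, Finset.sum_ite_eq' _ _ _,
                if_pos (Finset.mem_range.2 (FastTTProof.cod_lt' n P A j₀ hmem)),
                if_pos hmem]
            · have hz : ∀ x ∈ Finset.range (FastTTProof.T n P A j₀ P.val).card,
                  ttChain F (FastTTProof.rk n P A j₀) P.val 0 x * F P.val x y = 0 := by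
                intro x hx
                rw [LC P.val le_rfl x (Finset.mem_range.1 hx),
                  if_neg (fun h => hmem h.1), zero_mul]
              rw [Finset.sum_eq_zero hz, if_neg hmem]
          | succ c hc ih =>
            intro hc2 z hz
            have hcd : c < d := by omega
            have hcq : P.val < c := by omega
            simp only [ttChain]
            rw [hrk c (by omega)]
            have hbT : FastTTProof.dec n P A j₀ (c+1) z ∈ FastTTProof.T n P A j₀ (c+1) :=
              FastTTProof.dec_mem' n P A j₀ hz
            by_cases hmem : FastTTProof.norm n P j₀ P.val (fun m => idx m.1)
                ∈ FastTTProof.T n P A j₀ P.val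
            · have hkey : ∀ x ∈ Finset.range (FastTTProof.T n P A j₀ c).card,
                  ttChain F (FastTTProof.rk n P A j₀) c 0 x * F c x z =
                    (if x = FastTTProof.cod n P A j₀ c
                          (FastTTProof.setc n P (FastTTProof.dec n P A j₀ (c+1) z)
                            ⟨c, hcd⟩ (idx ⟨c, hcd⟩))
                        ∧ FastTTProof.setc n P (FastTTProof.dec n P A j₀ (c+1) z)
                            ⟨c, hcd⟩ (idx ⟨c, hcd⟩) ∈ FastTTProof.T n P A j₀ c then
                      A (glue n P (FastTTProof.mix n P (c+1)
                        (FastTTProof.dec n P A j₀ (c+1) z) (fun m => idx m.1)) (idx P))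
                    else 0) := by
                intro x hx
                have hx' := Finset.mem_range.1 hx
                rw [ih (by omega) x hx', if_pos hmem]
                have hFv : F c x z = (if FastTTProof.dec n P A j₀ c x
                    = FastTTProof.setc n P (FastTTProof.dec n P A j₀ (c+1) z)
                        ⟨c, hcd⟩ (idx ⟨c, hcd⟩) then (1:ℝ) else 0) := by
                  simp only [hF]
                  rw [dif_pos hcd, FastTTProof.core_right n P A j₀ hcd hcq _ _ _ hz]
                rw [hFv]
                by_cases hdx : FastTTProof.dec n P A j₀ c x
                    = FastTTProof.setc n P (FastTTProof.dec n P A j₀ (c+1) z)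
                        ⟨c, hcd⟩ (idx ⟨c, hcd⟩)
                · rw [if_pos hdx, mul_one]
                  have hcT : FastTTProof.setc n P (FastTTProof.dec n P A j₀ (c+1) z)
                      ⟨c, hcd⟩ (idx ⟨c, hcd⟩) ∈ FastTTProof.T n P A j₀ c :=
                    hdx ▸ FastTTProof.dec_mem' n P A j₀ hx'
                  have hxc : x = FastTTProof.cod n P A j₀ c
                      (FastTTProof.setc n P (FastTTProof.dec n P A j₀ (c+1) z)
                        ⟨c, hcd⟩ (idx ⟨c, hcd⟩)) := by
                    rw [← hdx, FastTTProof.cod_dec' n P A j₀ hx']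
                  rw [if_pos ⟨hxc, hcT⟩, ← FastTTProof.mix_setc n P idx hcq hcd
                    (FastTTProof.dec n P A j₀ (c+1) z), ← hdx]
                · rw [if_neg hdx, mul_zero]
                  by_cases hcT : FastTTProof.setc n P (FastTTProof.dec n P A j₀ (c+1) z)
                      ⟨c, hcd⟩ (idx ⟨c, hcd⟩) ∈ FastTTProof.T n P A j₀ c
                  · have hne : x ≠ FastTTProof.cod n P A j₀ c
                        (FastTTProof.setc n P (FastTTProof.dec n P A j₀ (c+1) z)
                          ⟨c, hcd⟩ (idx ⟨c, hcd⟩)) := by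
                      intro h
                      exact hdx (by rw [h]; exact FastTTProof.dec_cod' n P A j₀ hcT)
                    rw [if_neg (fun hh => hne hh.1)]
                  · rw [if_neg (fun hh => hcT hh.2)]
              rw [Finset.sum_congr rfl hkey]
              by_cases hcT : FastTTProof.setc n P (FastTTProof.dec n P A j₀ (c+1) z)
                  ⟨c, hcd⟩ (idx ⟨c, hcd⟩) ∈ FastTTProof.T n P A j₀ c
              · simp only [hcT, and_true]
                rw [Finset.sum_ite_eq' _ _ _,
                  if_pos (Finset.mem_range.2 (FastTTProof.cod_lt' n P A j₀ hcT)),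
                  if_pos hmem]
              · have hzz : ∀ x ∈ Finset.range (FastTTProof.T n P A j₀ c).card,
                    (if x = FastTTProof.cod n P A j₀ c
                          (FastTTProof.setc n P (FastTTProof.dec n P A j₀ (c+1) z)
                            ⟨c, hcd⟩ (idx ⟨c, hcd⟩))
                        ∧ FastTTProof.setc n P (FastTTProof.dec n P A j₀ (c+1) z)
                            ⟨c, hcd⟩ (idx ⟨c, hcd⟩) ∈ FastTTProof.T n P A j₀ c then
                      A (glue n P (FastTTProof.mix n P (c+1)
                        (FastTTProof.dec n P A j₀ (c+1) z) (fun m => idx m.1)) (idx P))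
                    else 0) = 0 := fun x hx => if_neg (fun hh => hcT hh.2)
                rw [Finset.sum_eq_zero hzz, if_pos hmem]
                have hw : FastTTProof.norm n P j₀ c (FastTTProof.mix n P (c+1)
                      (FastTTProof.dec n P A j₀ (c+1) z) (fun m => idx m.1))
                    = FastTTProof.setc n P (FastTTProof.dec n P A j₀ (c+1) z)
                        ⟨c, hcd⟩ (idx ⟨c, hcd⟩) :=
                  FastTTProof.norm_mix n P j₀ idx hcq hcd
                    (fun m hm => FastTTProof.T_outside n P A j₀ hbT hm)
                have hnS : FastTTProof.mix n P (c+1) (FastTTProof.dec n P A j₀ (c+1) z)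
                    (fun m => idx m.1) ∉ FastTTProof.S n P A := by
                  intro hs
                  exact hcT (hw ▸ Finset.mem_image_of_mem _ hs)
                rw [FastTTProof.A_glue_zero n P A hnS (idx P)]
            · have hz2 : ∀ x ∈ Finset.range (FastTTProof.T n P A j₀ c).card,
                  ttChain F (FastTTProof.rk n P A j₀) c 0 x * F c x z = 0 := by
                intro x hx
                rw [ih (by omega) x (Finset.mem_range.1 hx), if_neg hmem, zero_mul]
              rw [Finset.sum_eq_zero hz2, if_neg hmem]
        -- conclude
        have h0 : (0:ℕ) < (FastTTProof.T n P A j₀ d).card := by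
          rw [FastTTProof.T_card_boundary n P A j₀ (FastTTProof.win_top P) hS]
          omega
        rw [RC d (by omega) le_rfl 0 h0, FastTTProof.mix_top,
          FastTTProof.glue_restrict n P idx]
        by_cases hmem : FastTTProof.norm n P j₀ P.val (fun m => idx m.1)
            ∈ FastTTProof.T n P A j₀ P.val
        · rw [if_pos hmem]
        · rw [if_neg hmem]
          have hji : (fun m : {k : Fin d // k ≠ P} => idx m.1) ∉ FastTTProof.S n P A :=
            fun hs => hmem (Finset.mem_image_of_mem _ hs)
          have h2 := FastTTProof.A_glue_zero n P A hji (idx P)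
          rwa [FastTTProof.glue_restrict n P idx] at h2
    · -- left bounds
      intro k h1 h2
      rw [FastTTProof.rk, if_neg (by omega)]
      refine le_min ?_ ?_
      · rw [hRS]; exact Finset.card_image_le
      · exact FastTTProof.T_card_le_left n P A j₀ (by omega)
    · -- right bounds
      intro k h1 h2
      rw [FastTTProof.rk, if_neg (by omega)]
      refine le_min ?_ ?_
      · rw [hRS]; exact Finset.card_image_le
      · exact FastTTProof.T_card_le_right n P A j₀ (by omega) (by omega)
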